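/- Let A be a real n×n matrix with positive entries. The set C = {X ∈ ℝ^{n×n} : exp(X_{ij}) ≥ A_{ij}/2 for all i, j} is convex, and the function f(X) = Σ_{i,j=1}^n (exp(X_{ij}) − A_{ij})² is convex on C. (The scalar core of this claim: for a > 0, the function x ↦ (eˣ − a)² is convex on the set {x ∈ ℝ : eˣ ≥ a/2}.) -/

import Mathlib

open Matrix

lemma scalarSet_eq (a : ℝ) (ha : 0 < a) :
    {x : ℝ | a / 2 ≤ Real.exp x} = Set.Ici (Real.log (a / 2)) := by
  ext x
  simp only [Set.mem_setOf_eq, Set.mem_Ici]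
  rw [← Real.log_le_iff_le_exp (by positivity)]

lemma scalar_convexOn (a : ℝ) (ha : 0 < a) :
    ConvexOn ℝ {x : ℝ | a / 2 ≤ Real.exp x} (fun x => (Real.exp x - a) ^ 2) := by
  have hset : {x : ℝ | a / 2 ≤ Real.exp x} = Set.Ici (Real.log (a / 2)) := scalarSet_eq a ha
  rw [hset]
  apply convexOn_of_hasDerivWithinAt2_nonneg (f' := fun x => 2 * (Real.exp x - a) * Real.exp x)
      (f'' := fun x => 2 * Real.exp x * Real.exp x + 2 * (Real.exp x - a) * Real.exp x)
      (convex_Ici _)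
  · exact (Real.continuous_exp.sub continuous_const).pow 2 |>.continuousOn
  · intro x hx
    have h : HasDerivAt (fun x => (Real.exp x - a) ^ 2)
        (2 * (Real.exp x - a) * Real.exp x) x := by
      have := ((Real.hasDerivAt_exp x).sub_const a).fun_pow 2
      simpa [mul_comm, mul_assoc, mul_left_comm] using this
    exact h.hasDerivWithinAt
  · intro x hx
    have h : HasDerivAt (fun x => 2 * (Real.exp x - a) * Real.exp x)
        (2 * Real.exp x * Real.exp x + 2 * (Real.exp x - a) * Real.exp x) x := by
      have h1 : HasDerivAt (fun x => 2 * (Real.exp x - a)) (2 * Real.exp x) x := by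
        simpa using ((Real.hasDerivAt_exp x).sub_const a).const_mul 2
      simpa using h1.fun_mul (Real.hasDerivAt_exp x)
    exact h.hasDerivWithinAt
  · intro x hx
    have hx' : x ∈ Set.Ici (Real.log (a / 2)) := interior_subset hx
    have hxe : a / 2 ≤ Real.exp x := by
      rw [← hset] at hx'; exact hx'
    nlinarith [Real.exp_pos x]

theorem mseLoss_convexOn (n : ℕ) (A : Matrix (Fin n) (Fin n) ℝ)
    (hA : ∀ i j, 0 < A i j) :
    Convex ℝ {X : Matrix (Fin n) (Fin n) ℝ | ∀ i j, A i j / 2 ≤ Real.exp (X i j)} ∧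
    ConvexOn ℝ {X : Matrix (Fin n) (Fin n) ℝ | ∀ i j, A i j / 2 ≤ Real.exp (X i j)}
      (fun X => ∑ i, ∑ j, (Real.exp (X i j) - A i j) ^ 2) ∧
    ∀ a : ℝ, 0 < a →
      ConvexOn ℝ {x : ℝ | a / 2 ≤ Real.exp x} (fun x => (Real.exp x - a) ^ 2) := by
  have hscal : ∀ a : ℝ, 0 < a →
      ConvexOn ℝ {x : ℝ | a / 2 ≤ Real.exp x} (fun x => (Real.exp x - a) ^ 2) :=
    fun a ha => scalar_convexOn a ha
  have hC : Convex ℝ {X : Matrix (Fin n) (Fin n) ℝ | ∀ i j, A i j / 2 ≤ Real.exp (X i j)} := by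
    intro X hX Y hY s t hs ht hst i j
    have := ((hscal (A i j) (hA i j)).1) (hX i j) (hY i j) hs ht hst
    simpa [Matrix.add_apply, Matrix.smul_apply, smul_eq_mul] using this
  refine ⟨hC, ⟨hC, ?_⟩, hscal⟩
  intro X hX Y hY s t hs ht hst
  simp only [smul_eq_mul, Finset.mul_sum]
  rw [← Finset.sum_add_distrib]
  refine Finset.sum_le_sum fun i _ => ?_
  rw [← Finset.sum_add_distrib]
  refine Finset.sum_le_sum fun j _ => ?_
  have := (hscal (A i j) (hA i j)).2 (hX i j) (hY i j) hs ht hst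
  simpa [Matrix.add_apply, Matrix.smul_apply, smul_eq_mul] using this
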